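/- The function f(x) = sinh(x)^2 / cosh(θ x), for a fixed parameter θ with 0 ≤ θ ≤ 1/2, is strictly increasing on (0, ∞), tends to 0 as x → 0⁺, and tends to +∞ as x → +∞. Consequently, for every c > 0 there exists a unique x > 0 with sinh(x)^2 / cosh(θ x) = c. -/

import Mathlib

open Real Filter Set

/-- For fixed `θ ∈ [0, 1/2]`, the function `x ↦ sinh(x)^2 / cosh(θx)` is strictly
increasing on `(0, ∞)`, tends to `0` as `x → 0⁺`, tends to `+∞` as `x → +∞`, and
takes every positive value exactly once on `(0, ∞)`. -/
theorem sinh_sq_div_cosh_strictMono (θ : ℝ) (hθ0 : 0 ≤ θ) (hθ : θ ≤ 1 / 2) :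
    StrictMonoOn (fun x : ℝ => Real.sinh x ^ 2 / Real.cosh (θ * x)) (Set.Ioi 0) ∧
    Filter.Tendsto (fun x : ℝ => Real.sinh x ^ 2 / Real.cosh (θ * x))
      (nhdsWithin 0 (Set.Ioi 0)) (nhds 0) ∧
    Filter.Tendsto (fun x : ℝ => Real.sinh x ^ 2 / Real.cosh (θ * x))
      Filter.atTop Filter.atTop ∧
    ∀ c : ℝ, 0 < c → ∃! x : ℝ, 0 < x ∧ Real.sinh x ^ 2 / Real.cosh (θ * x) = c := by
  set f : ℝ → ℝ := fun x => Real.sinh x ^ 2 / Real.cosh (θ * x) with hf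
  have hcont : Continuous f := by
    apply Continuous.div
    · exact (Real.continuous_sinh).pow 2
    · exact Real.continuous_cosh.comp (continuous_const.mul continuous_id)
    · intro x; exact (Real.cosh_pos _).ne'
  have hmono : StrictMonoOn f (Set.Ioi 0) := by
    apply strictMonoOn_of_deriv_pos (convex_Ioi 0) hcont.continuousOn
    intro x hx
    rw [interior_Ioi] at hx
    have hx0 : (0:ℝ) < x := hx
    have hg : HasDerivAt (fun x : ℝ => Real.sinh x ^ 2)
        (2 * Real.sinh x ^ 1 * Real.cosh x) x := (Real.hasDerivAt_sinh x).pow 2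
    have hθx : HasDerivAt (fun x : ℝ => θ * x) (θ * 1) x :=
      (hasDerivAt_id x).const_mul θ
    have hh : HasDerivAt (fun x : ℝ => Real.cosh (θ * x))
        (Real.sinh (θ * x) * (θ * 1)) x :=
      (Real.hasDerivAt_cosh (θ * x)).comp x hθx
    have hne : Real.cosh (θ * x) ≠ 0 := (Real.cosh_pos _).ne'
    have hder : HasDerivAt f
        ((2 * Real.sinh x ^ 1 * Real.cosh x * Real.cosh (θ * x)
          - Real.sinh x ^ 2 * (Real.sinh (θ * x) * (θ * 1))) / Real.cosh (θ * x) ^ 2)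
        x := hg.div hh hne
    rw [hder.deriv]
    apply div_pos _ (pow_pos (Real.cosh_pos _) 2)
    have hs : 0 < Real.sinh x := Real.sinh_pos_iff.2 hx0
    have hsθ : 0 ≤ Real.sinh (θ * x) := Real.sinh_nonneg_iff.2 (mul_nonneg hθ0 hx0.le)
    have h1 : Real.sinh x < Real.cosh x := Real.sinh_lt_cosh x
    have h2 : Real.sinh (θ * x) < Real.cosh (θ * x) := Real.sinh_lt_cosh _
    have hcx : 0 < Real.cosh x := Real.cosh_pos x
    have hcθ : 0 < Real.cosh (θ * x) := Real.cosh_pos _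
    nlinarith [mul_pos hcx hcθ, mul_nonneg hs.le hsθ,
      mul_nonneg (mul_nonneg hs.le hsθ) (sub_nonneg.2 hθ),
      mul_nonneg hsθ (sub_nonneg.2 h1.le), mul_nonneg hs.le (sub_nonneg.2 h2.le)]
  have h0 : Filter.Tendsto f (nhdsWithin 0 (Set.Ioi 0)) (nhds 0) := by
    have : f 0 = 0 := by simp [hf]
    have := hcont.tendsto 0
    rw [‹f 0 = 0›] at this
    exact this.mono_left nhdsWithin_le_nhds
  have hbound : ∀ x : ℝ, 3 ≤ x → Real.sinh x ≤ f x := by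
    intro x hx3
    have hx0 : (0:ℝ) ≤ x := by linarith
    have hs : 0 < Real.sinh x := Real.sinh_pos_iff.2 (by linarith)
    have hcθ : 0 < Real.cosh (θ * x) := Real.cosh_pos _
    -- cosh (θ x) ≤ sinh x
    have key : Real.cosh (θ * x) ≤ Real.sinh x := by
      have h1 : Real.cosh (θ * x) ≤ Real.cosh (x / 2) := by
        rw [Real.cosh_le_cosh]
        rw [abs_of_nonneg (mul_nonneg hθ0 hx0), abs_of_nonneg (by linarith : (0:ℝ) ≤ x / 2)]
        nlinarith
      have h2 : Real.cosh (x / 2) ≤ Real.exp (x / 2) := by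
        rw [Real.cosh_eq]
        have := Real.exp_le_exp.2 (by linarith : -(x/2) ≤ x/2)
        linarith
      have h3 : Real.exp (x / 2) ≤ Real.sinh x := by
        rw [Real.sinh_eq]
        set t := Real.exp (x / 2) with ht
        have htx : Real.exp x = t ^ 2 := by
          rw [ht, sq, ← Real.exp_add]
          congr 1
          ring
        have htneg : Real.exp (-x) ≤ 1 := Real.exp_le_one_iff.2 (by linarith)
        have ht25 : (5:ℝ)/2 ≤ t := by
          have := Real.add_one_le_exp (x / 2)
          rw [← ht] at this
          linarith
        rw [htx]
        nlinarith
      linarith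
    rw [hf]
    rw [le_div_iff₀ hcθ]
    nlinarith
  have hsinh_top : Filter.Tendsto Real.sinh Filter.atTop Filter.atTop := by
    have h1 : Filter.Tendsto (fun x : ℝ => (Real.exp x - 1) / 2) Filter.atTop Filter.atTop := by
      apply Filter.Tendsto.atTop_div_const (by norm_num : (0:ℝ) < 2)
      simpa [sub_eq_add_neg] using Filter.tendsto_atTop_add_const_right Filter.atTop (-1) Real.tendsto_exp_atTop
    apply Filter.tendsto_atTop_mono' _ _ h1
    filter_upwards [Filter.eventually_ge_atTop (0:ℝ)] with x hx
    rw [Real.sinh_eq]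
    have := Real.exp_le_one_iff.2 (by linarith : -x ≤ 0)
    linarith
  have htop : Filter.Tendsto f Filter.atTop Filter.atTop := by
    apply Filter.tendsto_atTop_mono' _ _ hsinh_top
    filter_upwards [Filter.eventually_ge_atTop (3:ℝ)] with x hx using hbound x hx
  refine ⟨hmono, h0, htop, ?_⟩
  intro c hc
  -- existence
  obtain ⟨a, hfa, ha⟩ : ∃ a, f a < c ∧ a ∈ Set.Ioi (0:ℝ) := by
    have h1 : ∀ᶠ x in nhdsWithin 0 (Set.Ioi 0), f x < c :=
      h0.eventually (eventually_lt_nhds hc)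
    exact (h1.and self_mem_nhdsWithin).exists
  obtain ⟨b, hfb, hab⟩ : ∃ b, c < f b ∧ a ≤ b :=
    ((htop.eventually_gt_atTop c).and (Filter.eventually_ge_atTop a)).exists
  obtain ⟨x, hx, hfx⟩ : ∃ x ∈ Set.Icc a b, f x = c := by
    have := intermediate_value_Icc hab (hcont.continuousOn (s := Set.Icc a b))
    exact this ⟨hfa.le, hfb.le⟩
  have hx0 : 0 < x := lt_of_lt_of_le ha hx.1
  refine ⟨x, ⟨hx0, hfx⟩, ?_⟩
  rintro y ⟨hy0, hfy⟩
  exact hmono.injOn hy0 hx0 (hfy.trans hfx.symm)
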